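/- Let F: ℝⁿ ⇒ ℝᵐ be a set-valued mapping whose graph is locally closed at (x̄,ȳ) ∈ gph F. Then F is strictly proto-differentiable at x̄ for ȳ if and only if both gph D_*F(x̄,ȳ) and gph D*F(x̄,ȳ) are linear subspaces satisfying gph D*F(x̄,ȳ) = {(y*,x*) : (x*,−y*) ∈ (gph D_*F(x̄,ȳ))^⊥}. Moreover, in this case F is graphically regular at (x̄,ȳ). -/

import Mathlib

open Filter Topology Metric Set
open scoped RealInnerProductSpace NNReal ENNReal

noncomputable section

/-- Euclidean space `ℝⁿ`. -/
abbrev Euc (n : ℕ) : Type := EuclideanSpace ℝ (Fin n)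

section NormedDefs

variable {X Y : Type*} [NormedAddCommGroup X] [NormedSpace ℝ X]
  [NormedAddCommGroup Y] [NormedSpace ℝ Y]

/-- The (Bouligand) tangent cone to `Ω` at `z`. -/
def tanCone (Ω : Set X) (z : X) : Set X :=
  {w | ∃ (t : ℕ → ℝ) (wk : ℕ → X), (∀ k, 0 < t k) ∧ Tendsto t atTop (𝓝 0) ∧
      Tendsto wk atTop (𝓝 w) ∧ ∀ k, z + t k • wk k ∈ Ω}

/-- The regular (Clarke) tangent cone to `Ω` at `z`. -/
def clarkeCone (Ω : Set X) (z : X) : Set X :=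
  {w | ∀ (zk : ℕ → X) (t : ℕ → ℝ), (∀ k, zk k ∈ Ω) → Tendsto zk atTop (𝓝 z) →
      (∀ k, 0 < t k) → Tendsto t atTop (𝓝 0) →
      ∃ wk : ℕ → X, Tendsto wk atTop (𝓝 w) ∧ ∀ k, zk k + t k • wk k ∈ Ω}

/-- The paratingent cone to `Ω` at `z`. -/
def paraCone (Ω : Set X) (z : X) : Set X :=
  {w | ∃ (zk : ℕ → X) (t : ℕ → ℝ) (wk : ℕ → X), (∀ k, zk k ∈ Ω) ∧
      Tendsto zk atTop (𝓝 z) ∧ (∀ k, 0 < t k) ∧ Tendsto t atTop (𝓝 0) ∧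
      Tendsto wk atTop (𝓝 w) ∧ ∀ k, zk k + t k • wk k ∈ Ω}

/-- `Ω` is strictly smooth at `z` if the Clarke tangent cone and the paratingent
cone coincide there. -/
def StrictlySmoothAt (Ω : Set X) (z : X) : Prop := clarkeCone Ω z = paraCone Ω z

/-- `Ω` is geometrically derivable at `z`. -/
def GeomDerivableAt (Ω : Set X) (z : X) : Prop :=
  ∀ w ∈ tanCone Ω z, ∀ t : ℕ → ℝ, (∀ k, 0 < t k) → Tendsto t atTop (𝓝 0) →
    ∃ wk : ℕ → X, Tendsto wk atTop (𝓝 w) ∧ ∀ k, z + t k • wk k ∈ Ω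

/-- `Ω` is locally closed at `z`. -/
def LocallyClosedAt (Ω : Set X) (z : X) : Prop :=
  ∃ V : Set X, V ∈ 𝓝 z ∧ IsClosed V ∧ IsClosed (Ω ∩ V)

/-- The set `s` is a linear subspace. -/
def IsLinearSubspace (s : Set X) : Prop := ∃ S : Submodule ℝ X, (S : Set X) = s

/-- The set `s` is a linear subspace of dimension `d`. -/
def HasDim (s : Set X) (d : ℕ) : Prop :=
  ∃ S : Submodule ℝ X, (S : Set X) = s ∧ Module.finrank ℝ S = d

/-- The graph of a set-valued mapping. -/
def gphOf (Fm : X → Set Y) : Set (X × Y) := {p | p.2 ∈ Fm p.1}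

/-- The graph of a single-valued mapping defined on `U`. -/
def gphOn (f : X → Y) (U : Set X) : Set (X × Y) := {p | p.1 ∈ U ∧ p.2 = f p.1}

/-- `f` (defined on `U`) is strictly continuous (locally Lipschitz) at `xb`. -/
def StrictlyContinuousAt' (f : X → Y) (U : Set X) (xb : X) : Prop :=
  ∃ U' ∈ 𝓝 xb, U' ⊆ U ∧ ∃ κ : ℝ, 0 ≤ κ ∧
    ∀ x ∈ U', ∀ x' ∈ U', ‖f x - f x'‖ ≤ κ * ‖x - x'‖

/-- `f` (defined on `U`) is calm at `xb`. -/
def CalmAt' (f : X → Y) (U : Set X) (xb : X) : Prop :=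
  ∃ U' ∈ 𝓝 xb, U' ⊆ U ∧ ∃ κ : ℝ, 0 ≤ κ ∧ ∀ x ∈ U', ‖f x - f xb‖ ≤ κ * ‖x - xb‖

/-- `f` (defined on `U`) is strictly differentiable at `xb`. -/
def StrictDiffOnAt (f : X → Y) (U : Set X) (xb : X) : Prop :=
  ∃ A : X →L[ℝ] Y, ∀ ε : ℝ, 0 < ε → ∃ δ > 0, ∀ x ∈ U, ∀ x' ∈ U,
    ‖x - xb‖ < δ → ‖x' - xb‖ < δ → ‖f x' - f x - A (x' - x)‖ ≤ ε * ‖x' - x‖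

/-- `f` (defined on `U`) is Fréchet differentiable at `xb`. -/
def FrechetDiffOnAt (f : X → Y) (U : Set X) (xb : X) : Prop :=
  ∃ A : X →L[ℝ] Y, ∀ ε : ℝ, 0 < ε → ∃ δ > 0, ∀ x ∈ U,
    ‖x - xb‖ < δ → ‖f x - f xb - A (x - xb)‖ ≤ ε * ‖x - xb‖

/-- The B-Jacobian (Bouligand limiting Jacobian) of `f` at `xb`. -/
def BJacobian (f : X → Y) (U : Set X) (xb : X) : Set (X →L[ℝ] Y) :=
  {A | ∃ (xk : ℕ → X) (Ak : ℕ → X →L[ℝ] Y),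
      (∀ k, xk k ∈ U ∧ HasFDerivAt f (Ak k) (xk k)) ∧
      Tendsto xk atTop (𝓝 xb) ∧ Tendsto Ak atTop (𝓝 A)}

/-- `Ω ⊆ X` is a Lipschitz manifold of dimension `d` (and codimension `c`) around `z`:
up to a `C¹` change of coordinates `Φ`, `Ω` locally coincides with the graph of a
Lipschitz mapping `f : U → ℝᶜ`, `U ⊆ ℝᵈ` open. -/
def IsLipschitzManifoldAt (Ω : Set X) (d c : ℕ) (z : X) : Prop :=
  ∃ (W : Set X) (Φ : X → Euc d × Euc c) (Ψ : Euc d × Euc c → X)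
    (U : Set (Euc d)) (f : Euc d → Euc c) (K : ℝ≥0),
    IsOpen W ∧ z ∈ W ∧ IsOpen (Φ '' W) ∧
    ContDiffOn ℝ 1 Φ W ∧ ContDiffOn ℝ 1 Ψ (Φ '' W) ∧
    (∀ x ∈ W, Ψ (Φ x) = x) ∧ (∀ y ∈ Φ '' W, Φ (Ψ y) = y) ∧
    IsOpen U ∧ LipschitzOnWith K f U ∧
    Φ '' (Ω ∩ W) = {p | p.1 ∈ U ∧ p.2 = f p.1}

/-- As `IsLipschitzManifoldAt`, with the Lipschitz mapping `f` moreover strictly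
differentiable at the transformed reference point. -/
def IsGraphStrictDiffAt (Ω : Set X) (d c : ℕ) (z : X) : Prop :=
  ∃ (W : Set X) (Φ : X → Euc d × Euc c) (Ψ : Euc d × Euc c → X)
    (U : Set (Euc d)) (f : Euc d → Euc c) (K : ℝ≥0),
    IsOpen W ∧ z ∈ W ∧ IsOpen (Φ '' W) ∧
    ContDiffOn ℝ 1 Φ W ∧ ContDiffOn ℝ 1 Ψ (Φ '' W) ∧
    (∀ x ∈ W, Ψ (Φ x) = x) ∧ (∀ y ∈ Φ '' W, Φ (Ψ y) = y) ∧
    IsOpen U ∧ LipschitzOnWith K f U ∧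
    Φ '' (Ω ∩ W) = {p | p.1 ∈ U ∧ p.2 = f p.1} ∧
    StrictDiffOnAt f U (Φ z).1

/-- Strong metric subregularity of a set-valued mapping at `(xb, yb)`. -/
def StronglySubregAt (Fm : X → Set Y) (xb : X) (yb : Y) : Prop :=
  ∃ κ : ℝ≥0, ∃ U ∈ 𝓝 xb, ∀ x ∈ U,
    (‖x - xb‖₊ : ℝ≥0∞) ≤ (κ : ℝ≥0∞) * EMetric.infEdist yb (Fm x)

/-- Metric regularity of a set-valued mapping around `(xb, yb)`. -/
def MetricallyRegularAround (Fm : X → Set Y) (xb : X) (yb : Y) : Prop :=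
  ∃ κ : ℝ≥0, ∃ U ∈ 𝓝 xb, ∃ V ∈ 𝓝 yb, ∀ x ∈ U, ∀ y ∈ V,
    EMetric.infEdist x {x' | y ∈ Fm x'} ≤ (κ : ℝ≥0∞) * EMetric.infEdist y (Fm x)

/-- Strong metric regularity of a set-valued mapping around `(xb, yb)`. -/
def StronglyRegularAround (Fm : X → Set Y) (xb : X) (yb : Y) : Prop :=
  MetricallyRegularAround Fm xb yb ∧
  ∃ (U' : Set X) (V' : Set Y) (h : Y → X), IsOpen U' ∧ IsOpen V' ∧
    xb ∈ U' ∧ yb ∈ V' ∧ h yb = xb ∧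
    gphOf Fm ∩ (U' ×ˢ V') = {p | p.2 ∈ V' ∧ p.1 = h p.2}

end NormedDefs

section InnerDefs

variable {E F : Type*} [NormedAddCommGroup E] [InnerProductSpace ℝ E]
  [NormedAddCommGroup F] [InnerProductSpace ℝ F]

/-- The regular (Fréchet) normal cone: the polar of the tangent cone. -/
def regNormal (Ω : Set E) (z : E) : Set E := {v | ∀ w ∈ tanCone Ω z, ⟪v, w⟫ ≤ 0}

/-- The limiting (Mordukhovich) normal cone. -/
def limNormal (Ω : Set E) (z : E) : Set E :=
  {v | ∃ zk vk : ℕ → E, (∀ k, zk k ∈ Ω) ∧ Tendsto zk atTop (𝓝 z) ∧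
      (∀ k, vk k ∈ regNormal Ω (zk k)) ∧ Tendsto vk atTop (𝓝 v)}

/-- `Ω` is normally regular at `z`. -/
def NormallyRegularAt (Ω : Set E) (z : E) : Prop := regNormal Ω z = limNormal Ω z

/-- The orthogonal complement (as a set) of a set. -/
def orthSet (s : Set E) : Set E := {v | ∀ w ∈ s, ⟪v, w⟫ = 0}

/-- `Ω` is semismooth* at `zb`. -/
def SemismoothStarAt (Ω : Set E) (zb : E) : Prop :=
  ∀ ε : ℝ, 0 < ε → ∃ δ > 0, ∀ z ∈ Ω, ‖z - zb‖ < δ → ∀ v ∈ limNormal Ω z,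
    |⟪v, z - zb⟫| ≤ ε * ‖z - zb‖ * ‖v‖

/-- The canonical inner product of the product of two inner product spaces. -/
def inner2 (p q : E × F) : ℝ := ⟪p.1, q.1⟫ + ⟪p.2, q.2⟫

/-- The regular normal cone for subsets of a product space. -/
def regNormal2 (Ω : Set (E × F)) (z : E × F) : Set (E × F) :=
  {v | ∀ w ∈ tanCone Ω z, inner2 v w ≤ 0}

/-- The limiting normal cone for subsets of a product space. -/
def limNormal2 (Ω : Set (E × F)) (z : E × F) : Set (E × F) :=
  {v | ∃ zk vk : ℕ → E × F, (∀ k, zk k ∈ Ω) ∧ Tendsto zk atTop (𝓝 z) ∧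
      (∀ k, vk k ∈ regNormal2 Ω (zk k)) ∧ Tendsto vk atTop (𝓝 v)}

/-- Normal regularity for subsets of a product space. -/
def NormallyRegular2At (Ω : Set (E × F)) (z : E × F) : Prop :=
  regNormal2 Ω z = limNormal2 Ω z

/-- Orthogonal complement (as a set) in a product space. -/
def orthSet2 (s : Set (E × F)) : Set (E × F) := {v | ∀ w ∈ s, inner2 v w = 0}

/-- The graph of the limiting coderivative of a mapping with graph `Γ` at `z`:
`{(y*, x*) : (x*, -y*) ∈ N_Γ(z)}`. -/
def coderivGraph (Γ : Set (E × F)) (z : E × F) : Set (F × E) :=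
  {q | (q.2, -q.1) ∈ limNormal2 Γ z}

/-- The semismooth* property for subsets of a product space (i.e. for mappings). -/
def SemismoothStar2At (Ω : Set (E × F)) (zb : E × F) : Prop :=
  ∀ ε : ℝ, 0 < ε → ∃ δ > 0, ∀ z ∈ Ω, ‖z - zb‖ < δ → ∀ v ∈ limNormal2 Ω z,
    |inner2 v (z - zb)| ≤ ε * ‖z - zb‖ * ‖v‖

/-- The regular subdifferential of an extended-real-valued function. -/
def regSubdiff (φ : E → EReal) (xb : E) : Set E :=
  {v | φ xb ≠ ⊤ ∧ φ xb ≠ ⊥ ∧ ∀ ε : ℝ, 0 < ε → ∃ δ > 0, ∀ x, ‖x - xb‖ < δ →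
      φ xb + ((⟪v, x - xb⟫ - ε * ‖x - xb‖ : ℝ) : EReal) ≤ φ x}

/-- The limiting (Mordukhovich) subdifferential. -/
def limSubdiff (φ : E → EReal) (xb : E) : Set E :=
  {v | ∃ xk vk : ℕ → E, Tendsto xk atTop (𝓝 xb) ∧
      Tendsto (fun k => φ (xk k)) atTop (𝓝 (φ xb)) ∧
      (∀ k, vk k ∈ regSubdiff φ (xk k)) ∧ Tendsto vk atTop (𝓝 v)}

/-- `φ` is prox-regular at `xb` for `vb` with parameters `r ≥ 0` and `ε > 0`. -/
def ProxRegular (φ : E → EReal) (xb vb : E) (r ε : ℝ) : Prop :=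
  ∀ x' x v, ‖x' - xb‖ < ε → v ∈ limSubdiff φ x → ‖x - xb‖ < ε → ‖v - vb‖ < ε →
    φ x < φ xb + (ε : EReal) →
    φ x + ((⟪v, x' - x⟫ - r / 2 * ‖x' - x‖ ^ 2 : ℝ) : EReal) ≤ φ x'

/-- The graph of the `φ`-attentive `ε`-localization of `∂φ` around `(xb, vb)`. -/
def attLocGraph (φ : E → EReal) (xb vb : E) (ε : ℝ) : Set (E × E) :=
  {p | p.2 ∈ limSubdiff φ p.1 ∧ ‖p.1 - xb‖ < ε ∧ ‖p.2 - vb‖ < ε ∧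
      φ p.1 < φ xb + (ε : EReal)}

end InnerDefs

/-- The map `ℝⁿ → ℝᵈ × ℝᶜ` obtained from a permutation (re-indexing) of the
coordinates followed by splitting them into the first `d` and the last `c` ones. -/
def permSplit {n d c : ℕ} (e : Fin n ≃ (Fin d ⊕ Fin c)) (z : Euc n) : Euc d × Euc c :=
  (show Euc d from WithLp.toLp 2 (fun i => z (e.symm (Sum.inl i))),
   show Euc c from WithLp.toLp 2 (fun j => z (e.symm (Sum.inr j))))
section AbstractLemmas

variable {H : Type*} [NormedAddCommGroup H] [InnerProductSpace ℝ H]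

/-- auxiliary sequence 1/(k+1) -/
lemma tseq_pos (k : ℕ) : (0:ℝ) < 1 / (k + 1) := by positivity

lemma tseq_tendsto : Tendsto (fun k : ℕ => 1 / ((k : ℝ) + 1)) atTop (𝓝 0) :=
  tendsto_one_div_add_atTop_nhds_zero_nat

lemma clarke_zero {Ω : Set H} (zk : ℕ → H) (t : ℕ → ℝ) (hzk : ∀ k, zk k ∈ Ω) :
    ∃ wk : ℕ → H, Tendsto wk atTop (𝓝 (0:H)) ∧ ∀ k, zk k + t k • wk k ∈ Ω := by
  exact ⟨fun _ => 0, tendsto_const_nhds, fun k => by simpa using hzk k⟩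

lemma zero_mem_clarke {Ω : Set H} {z : H} : (0:H) ∈ clarkeCone Ω z := by
  intro zk t hzk _ _ _
  exact clarke_zero zk t hzk

lemma clarke_add {Ω : Set H} {z : H} {w1 w2 : H} (h1 : w1 ∈ clarkeCone Ω z)
    (h2 : w2 ∈ clarkeCone Ω z) : w1 + w2 ∈ clarkeCone Ω z := by
  intro zk t hzk hz ht htd
  obtain ⟨w1k, hw1, hm1⟩ := h1 zk t hzk hz ht htd
  have hz' : Tendsto (fun k => zk k + t k • w1k k) atTop (𝓝 z) := by
    have : Tendsto (fun k => t k • w1k k) atTop (𝓝 ((0:ℝ) • w1)) := htd.smul hw1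
    rw [zero_smul] at this
    simpa using hz.add this
  obtain ⟨w2k, hw2, hm2⟩ := h2 (fun k => zk k + t k • w1k k) t hm1 hz' ht htd
  refine ⟨fun k => w1k k + w2k k, hw1.add hw2, fun k => ?_⟩
  have := hm2 k
  simpa [smul_add, add_assoc] using this

lemma clarke_smul {Ω : Set H} {z : H} {w : H} {c : ℝ} (hc : 0 < c)
    (h : w ∈ clarkeCone Ω z) : c • w ∈ clarkeCone Ω z := by
  intro zk t hzk hz ht htd
  have htd' : Tendsto (fun k => c * t k) atTop (𝓝 0) := by
    simpa using htd.const_mul c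
  obtain ⟨wk, hwk, hm⟩ := h zk (fun k => c * t k) hzk hz (fun k => mul_pos hc (ht k)) htd'
  refine ⟨fun k => c • wk k, hwk.const_smul c, fun k => ?_⟩
  have := hm k
  simpa [smul_smul, mul_comm] using this

lemma clarke_subset_tan {Ω : Set H} {z : H} (hz : z ∈ Ω) :
    clarkeCone Ω z ⊆ tanCone Ω z := by
  intro w hw
  obtain ⟨wk, hwk, hm⟩ := hw (fun _ => z) (fun k => 1 / (k + 1)) (fun _ => hz)
    tendsto_const_nhds tseq_pos tseq_tendsto
  exact ⟨_, wk, tseq_pos, tseq_tendsto, hwk, hm⟩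

lemma tan_subset_para {Ω : Set H} {z : H} (hz : z ∈ Ω) :
    tanCone Ω z ⊆ paraCone Ω z := by
  rintro w ⟨t, wk, ht, htd, hwk, hm⟩
  exact ⟨fun _ => z, t, wk, fun _ => hz, tendsto_const_nhds, ht, htd, hwk, hm⟩

lemma para_neg {Ω : Set H} {z : H} {w : H} (h : w ∈ paraCone Ω z) :
    -w ∈ paraCone Ω z := by
  obtain ⟨zk, t, wk, hzk, hz, ht, htd, hwk, hm⟩ := h
  refine ⟨fun k => zk k + t k • wk k, t, fun k => -wk k, hm, ?_, ht, htd, hwk.neg,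
    fun k => by simpa using hzk k⟩
  have : Tendsto (fun k => t k • wk k) atTop (𝓝 ((0:ℝ) • w)) := htd.smul hwk
  rw [zero_smul] at this
  simpa using hz.add this

lemma regNormal_subset_limNormal {Ω : Set H} {z : H} (hz : z ∈ Ω) :
    regNormal Ω z ⊆ limNormal Ω z := by
  intro v hv
  exact ⟨fun _ => z, fun _ => v, fun _ => hz, tendsto_const_nhds, fun _ => hv,
    tendsto_const_nhds⟩

end AbstractLemmas

section AbstractLemmas2

variable {H : Type*} [NormedAddCommGroup H] [InnerProductSpace ℝ H] [FiniteDimensional ℝ H]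

lemma regNormal_frechet {Ω : Set H} {z : H} {v : H} (hv : v ∈ regNormal Ω z) :
    ∀ ε : ℝ, 0 < ε → ∃ δ > 0, ∀ z' ∈ Ω, ‖z' - z‖ < δ → ⟪v, z' - z⟫ ≤ ε * ‖z' - z‖ := by
  by_contra hcon
  push_neg at hcon
  obtain ⟨ε, hε, hall⟩ := hcon
  choose z' hz'Ω hz'n hz'i using fun k : ℕ => hall (1 / (k + 1)) (tseq_pos k)
  have hne : ∀ k, z' k - z ≠ 0 := by
    intro k hzero
    have := hz'i k
    rw [hzero] at this
    simp at this
  set t : ℕ → ℝ := fun k => ‖z' k - z‖ with ht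
  have htpos : ∀ k, 0 < t k := fun k => norm_pos_iff.2 (hne k)
  have htd : Tendsto t atTop (𝓝 0) := by
    apply squeeze_zero (fun k => (htpos k).le) (fun k => (hz'n k).le) tseq_tendsto
  set u : ℕ → H := fun k => (t k)⁻¹ • (z' k - z) with hu
  have hunorm : ∀ k, u k ∈ Metric.sphere (0:H) 1 := by
    intro k
    simp only [hu, mem_sphere_iff_norm, sub_zero, norm_smul, norm_inv, Real.norm_eq_abs,
      abs_of_pos (htpos k)]
    show (t k)⁻¹ * t k = 1
    exact inv_mul_cancel₀ (ne_of_gt (htpos k))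
  obtain ⟨ub, hub, φ, hφ, huφ⟩ := (isCompact_sphere (0:H) 1).tendsto_subseq hunorm
  have hub_tan : ub ∈ tanCone Ω z := by
    refine ⟨t ∘ φ, u ∘ φ, fun k => htpos _, htd.comp hφ.tendsto_atTop, huφ, fun k => ?_⟩
    show z + t (φ k) • ((t (φ k))⁻¹ • (z' (φ k) - z)) ∈ Ω
    rw [smul_smul, mul_inv_cancel₀ (ne_of_gt (htpos _)), one_smul]
    simpa using hz'Ω (φ k)
  have hineq : ∀ k, ε < ⟪v, u k⟫ := by
    intro k
    have h1 := hz'i k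
    have : ⟪v, u k⟫ = (t k)⁻¹ * ⟪v, z' k - z⟫ := by
      simp [hu, real_inner_smul_right]
    rw [this, inv_mul_eq_div, lt_div_iff₀ (htpos k)]
    exact h1
  -- limit
  have hten : Tendsto (fun k => ⟪v, u (φ k)⟫) atTop (𝓝 ⟪v, ub⟫) :=
    (tendsto_const_nhds : Tendsto (fun _ : ℕ => v) atTop (𝓝 v)).inner huφ
  have : ε ≤ ⟪v, ub⟫ := ge_of_tendsto hten (Filter.Eventually.of_forall fun k => (hineq (φ k)).le)
  have h0 := hv ub hub_tan
  linarith

lemma limNormal_clarke_polar {Ω : Set H} {z : H} {v w : H}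
    (hv : v ∈ limNormal Ω z) (hw : w ∈ clarkeCone Ω z) : ⟪v, w⟫ ≤ 0 := by
  obtain ⟨zk, vk, hzkΩ, hzkz, hvkN, hvkv⟩ := hv
  choose δ hδpos hδ using fun k : ℕ => regNormal_frechet (hvkN k) (1 / (k + 1)) (tseq_pos k)
  set t : ℕ → ℝ := fun k => min (δ k / (‖w‖ + 2)) (1 / (k + 1)) with htdef
  have hwpos : (0:ℝ) < ‖w‖ + 2 := by positivity
  have htpos : ∀ k, 0 < t k := fun k => lt_min (div_pos (hδpos k) hwpos) (tseq_pos k)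
  have htd : Tendsto t atTop (𝓝 0) :=
    squeeze_zero (fun k => (htpos k).le) (fun k => min_le_right _ _) tseq_tendsto
  obtain ⟨wk, hwk, hm⟩ := hw zk t hzkΩ hzkz htpos htd
  have hev : ∀ᶠ k in atTop, ‖wk k‖ ≤ ‖w‖ + 1 := by
    have : Tendsto (fun k => ‖wk k‖) atTop (𝓝 ‖w‖) := hwk.norm
    have := this.eventually_le_const (show ‖w‖ < ‖w‖ + 1 by linarith)
    exact this
  have hkey : ∀ᶠ k in atTop, ⟪vk k, wk k⟫ ≤ 1 / (k + 1) * ‖wk k‖ := by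
    filter_upwards [hev] with k hk
    have hz' : zk k + t k • wk k ∈ Ω := hm k
    have hnorm : ‖zk k + t k • wk k - zk k‖ = t k * ‖wk k‖ := by
      simp [norm_smul, abs_of_pos (htpos k)]
    have hlt : ‖zk k + t k • wk k - zk k‖ < δ k := by
      rw [hnorm]
      have h1 : t k ≤ δ k / (‖w‖ + 2) := min_le_left _ _
      have h2 : t k * ‖wk k‖ ≤ δ k / (‖w‖ + 2) * (‖w‖ + 1) :=
        mul_le_mul h1 hk (norm_nonneg _) (le_of_lt (div_pos (hδpos k) hwpos))
      have h3 : δ k / (‖w‖ + 2) * (‖w‖ + 1) < δ k := by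
        rw [div_mul_eq_mul_div, div_lt_iff₀ hwpos]
        nlinarith [hδpos k]
      linarith
    have hthis := hδ k _ hz' hlt
    rw [show zk k + t k • wk k - zk k = t k • wk k by abel, real_inner_smul_right] at hthis
    have hsm : ‖t k • wk k‖ = t k * ‖wk k‖ := by
      simp [norm_smul, abs_of_pos (htpos k)]
    rw [hsm] at hthis
    have h2 : (1:ℝ) / (k + 1) * (t k * ‖wk k‖) = t k * (1 / (k + 1) * ‖wk k‖) := by ring
    rw [h2] at hthis
    exact le_of_mul_le_mul_left hthis (htpos k)
  have h1 : Tendsto (fun k => ⟪vk k, wk k⟫) atTop (𝓝 ⟪v, w⟫) := hvkv.inner hwk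
  have h2 : Tendsto (fun k : ℕ => 1 / ((k:ℝ) + 1) * ‖wk k‖) atTop (𝓝 0) := by
    have := tseq_tendsto.mul hwk.norm
    simpa using this
  exact le_of_tendsto_of_tendsto h1 h2 hkey

end AbstractLemmas2

section AbstractHard

variable {H : Type*} [NormedAddCommGroup H] [InnerProductSpace ℝ H] [FiniteDimensional ℝ H]


private lemma quad_step {rs s ε X nw : ℝ} (hspos : 0 < s)
    (h : (rs + ε / 2 * s) ^ 2 ≤ rs ^ 2 + 2 * (s * X) + s ^ 2 * nw ^ 2) :
    ε / 2 * rs - s / 2 * nw ^ 2 ≤ X := by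
  have h5 : ε * rs * s - s ^ 2 * nw ^ 2 ≤ 2 * s * X := by nlinarith [sq_nonneg (ε * s)]
  have h7 : (2 * s) * (ε / 2 * rs - s / 2 * nw ^ 2) ≤ (2 * s) * X := by nlinarith
  exact le_of_mul_le_mul_left h7 (by positivity)

private lemma quad_step2 {ε r rs s X nw : ℝ} (hε : 0 < ε) (hrs : 0 < rs) (hs : 0 ≤ s)
    (h1 : ε / 2 * rs - s / 2 * nw ^ 2 ≤ X) (hs2 : s * (nw ^ 2 + 1) ≤ ε * r / 8)
    (hrs2 : r / 2 ≤ rs) : ε / 4 * rs ≤ X := by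
  have hb1 : s * nw ^ 2 ≤ ε * r / 8 := by nlinarith
  have hb2 : ε * r / 8 ≤ ε * rs / 4 := by nlinarith
  nlinarith

set_option maxHeartbeats 1000000 in
lemma para_subset_clarke {Ω : Set H} {z : H} (hz : z ∈ Ω)
    (hloc : LocallyClosedAt Ω z)
    (hperp : ∀ v ∈ limNormal Ω z, ∀ u ∈ paraCone Ω z, ⟪v, u⟫ ≤ 0) :
    paraCone Ω z ⊆ clarkeCone Ω z := by
  intro w hwpara
  by_cases hw0 : w = 0
  · subst hw0; exact zero_mem_clarke
  obtain ⟨V, hV, hVc, hΩV⟩ := hloc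
  obtain ⟨ρ, hρpos, hρ⟩ : ∃ ρ > 0, Metric.closedBall z ρ ⊆ V :=
    Metric.nhds_basis_closedBall.mem_iff.mp hV
  set Ω' := Ω ∩ V with hΩ'def
  have hzΩ' : z ∈ Ω' := ⟨hz, mem_of_mem_nhds hV⟩
  have hΩ'ne : Ω'.Nonempty := ⟨z, hzΩ'⟩
  have hΩ'cl : IsClosed Ω' := hΩV
  -- proximal normals are regular normals (localized version)
  have prox : ∀ a p : H, p ∈ Ω' → ‖p - z‖ < ρ →
      (∀ u ∈ Ω', dist a p ≤ dist a u) → (a - p) ∈ regNormal Ω p := by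
    intro a p hpΩ' hpρ hnear w' hw'
    obtain ⟨tj, wj, htj, htjd, hwj, hmj⟩ := hw'
    have hten : Tendsto (fun j => p + tj j • wj j) atTop (𝓝 p) := by
      have h1 : Tendsto (fun j => tj j • wj j) atTop (𝓝 ((0:ℝ) • w')) := htjd.smul hwj
      rw [zero_smul] at h1
      simpa using (tendsto_const_nhds : Tendsto (fun _ : ℕ => p) atTop (𝓝 p)).add h1
    have hpball : p ∈ Metric.ball z ρ := by
      rw [Metric.mem_ball, dist_eq_norm]; exact hpρ
    have hev : ∀ᶠ j in atTop, p + tj j • wj j ∈ Ω' := by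
      filter_upwards [hten.eventually_mem (Metric.isOpen_ball.mem_nhds hpball)] with j hj
      exact ⟨hmj j, hρ (Metric.ball_subset_closedBall hj)⟩
    have hineq : ∀ᶠ j in atTop, ⟪a - p, wj j⟫ ≤ tj j / 2 * ‖wj j‖ ^ 2 := by
      filter_upwards [hev] with j hj
      have h1 := hnear _ hj
      have h1' : ‖a - p‖ ≤ ‖(a - p) - tj j • wj j‖ := by
        have he : a - (p + tj j • wj j) = (a - p) - tj j • wj j := by abel
        rw [dist_eq_norm, dist_eq_norm, he] at h1
        exact h1
      have h2 : ‖a - p‖ ^ 2 ≤ ‖(a - p) - tj j • wj j‖ ^ 2 :=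
        pow_le_pow_left₀ (norm_nonneg _) h1' 2
      have hexp : ‖(a - p) - tj j • wj j‖ ^ 2 =
          ‖a - p‖ ^ 2 - 2 * (tj j * ⟪a - p, wj j⟫) + (tj j) ^ 2 * ‖wj j‖ ^ 2 := by
        rw [norm_sub_sq_real, real_inner_smul_right, norm_smul, mul_pow, Real.norm_eq_abs, sq_abs]
      rw [hexp] at h2
      nlinarith [htj j]
    have hlim1 : Tendsto (fun j => ⟪a - p, wj j⟫) atTop (𝓝 ⟪a - p, w'⟫) :=
      (tendsto_const_nhds : Tendsto (fun _ : ℕ => a - p) atTop (𝓝 (a - p))).inner hwj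
    have hlim2 : Tendsto (fun j => tj j / 2 * ‖wj j‖ ^ 2) atTop (𝓝 0) := by
      have := (htjd.div_const 2).mul ((hwj.norm).pow 2)
      simpa using this
    exact le_of_tendsto_of_tendsto hlim1 hlim2 hineq
  -- the key construction of an approximate proximal normal with positive pairing with w
  have key : ∀ ε : ℝ, 0 < ε → ∀ z0 : H, ∀ t0 : ℝ, z0 ∈ Ω' → 0 < t0 →
      ‖z0 - z‖ + 2 * t0 * ‖w‖ < ρ → ε * t0 ≤ Metric.infDist (z0 + t0 • w) Ω' →
      ∃ p v : H, p ∈ Ω ∧ ‖p - z0‖ ≤ 2 * t0 * ‖w‖ ∧ v ∈ regNormal Ω p ∧ ‖v‖ = 1 ∧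
        ε / 4 ≤ ⟪v, w⟫ := by
    intro ε hε z0 t0 hz0 ht0 hsmall hsep
    set g : ℝ → ℝ := fun τ => Metric.infDist (z0 + τ • w) Ω' with hgdef
    have hgc : Continuous g :=
      (Metric.continuous_infDist_pt Ω').comp (continuous_const.add (continuous_id.smul continuous_const))
    obtain ⟨τs, hτsIcc, hτsmax⟩ :=
      isCompact_Icc.exists_isMaxOn (f := fun τ : ℝ => g τ - ε / 2 * τ)
        (Set.nonempty_Icc.2 ht0.le) ((hgc.sub (continuous_const.mul continuous_id)).continuousOn)
    have hmaxτ : ∀ x ∈ Set.Icc (0:ℝ) t0, g x - ε / 2 * x ≤ g τs - ε / 2 * τs :=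
      fun x hx => isMaxOn_iff.mp hτsmax x hx
    have hgt0 : ε * t0 ≤ g t0 := hsep
    have hψτs : ε / 2 * t0 ≤ g τs - ε / 2 * τs :=
      le_trans (by linarith) (hmaxτ t0 (Set.right_mem_Icc.2 ht0.le))
    have hg0 : g 0 = 0 := by
      simp only [hgdef, zero_smul, add_zero]
      exact Metric.infDist_zero_of_mem hz0
    have hτspos : 0 < τs := by
      rcases (hτsIcc.1).lt_or_eq with h | h
      · exact h
      · exfalso
        rw [← h, hg0] at hψτs
        nlinarith [mul_pos hε ht0]
    have hrpos : 0 < g τs := by nlinarith [mul_pos hε ht0, mul_nonneg hε.le hτsIcc.1]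
    set r := g τs with hrdef
    set s := min τs (min (r / (2 * (‖w‖ + 1))) (ε * r / (8 * (‖w‖ ^ 2 + 1)))) with hsdef
    have hspos : 0 < s := lt_min hτspos (lt_min (by positivity) (by positivity))
    have hsτs : s ≤ τs := min_le_left _ _
    have hs1 : s * (‖w‖ + 1) ≤ r / 2 := by
      have h1 : s ≤ r / (2 * (‖w‖ + 1)) := le_trans (min_le_right _ _) (min_le_left _ _)
      rw [le_div_iff₀ (by positivity)] at h1
      nlinarith
    have hs2 : s * (‖w‖ ^ 2 + 1) ≤ ε * r / 8 := by
      have h1 : s ≤ ε * r / (8 * (‖w‖ ^ 2 + 1)) := le_trans (min_le_right _ _) (min_le_right _ _)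
      rw [le_div_iff₀ (by positivity)] at h1
      nlinarith
    set σ := τs - s with hσdef
    have hσnn : 0 ≤ σ := sub_nonneg.2 hsτs
    have hστ : σ ≤ t0 := le_trans (sub_le_self _ hspos.le) hτsIcc.2
    set aσ := z0 + σ • w with haσdef
    obtain ⟨p, hpΩ', hpd⟩ := hΩ'cl.exists_infDist_eq_dist hΩ'ne aσ
    set rσ := g σ with hrσdef
    have hrσd : rσ = dist aσ p := hpd
    have hlip : |rσ - r| ≤ s * ‖w‖ := by
      have h1 := (Metric.lipschitz_infDist_pt Ω').dist_le_mul aσ (z0 + τs • w)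
      have h2 : dist aσ (z0 + τs • w) = s * ‖w‖ := by
        rw [dist_eq_norm]
        have he : aσ - (z0 + τs • w) = -(s • w) := by rw [haσdef, hσdef]; module
        rw [he, norm_neg, norm_smul, Real.norm_eq_abs, abs_of_pos hspos]
      have h3 : dist rσ r = |rσ - r| := Real.dist_eq _ _
      rw [← h3]
      calc dist rσ r ≤ 1 * dist aσ (z0 + τs • w) := h1
        _ = s * ‖w‖ := by rw [one_mul, h2]
    have hrσ2 : r / 2 ≤ rσ := by
      have h1 := abs_le.1 hlip
      have h2 : s * ‖w‖ ≤ s * (‖w‖ + 1) := by nlinarith [hspos.le]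
      linarith [h1.1]
    have hrσpos : 0 < rσ := by linarith
    have hmax : rσ + ε / 2 * s ≤ r := by
      have h1 := hmaxτ σ ⟨hσnn, hστ⟩
      rw [hσdef] at h1
      have h2 : rσ = g σ := hrσdef
      rw [hσdef] at h2
      rw [h2]
      linarith
    have hchord : r ≤ ‖(aσ - p) + s • w‖ := by
      have he1 : z0 + τs • w = aσ + s • w := by
        rw [haσdef, hσdef]; module
      have he2 : r = Metric.infDist (aσ + s • w) Ω' := by rw [hrdef, hgdef]; rw [← he1]
      rw [he2]
      calc Metric.infDist (aσ + s • w) Ω' ≤ dist (aσ + s • w) p :=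
            Metric.infDist_le_dist_of_mem hpΩ'
        _ = ‖(aσ - p) + s • w‖ := by rw [dist_eq_norm]; congr 1; abel
    have hineq1 : rσ + ε / 2 * s ≤ ‖(aσ - p) + s • w‖ := le_trans hmax hchord
    have hnorm_ap : ‖aσ - p‖ = rσ := by rw [hrσd, dist_eq_norm]
    have hsq : ‖(aσ - p) + s • w‖ ^ 2 = rσ ^ 2 + 2 * (s * ⟪aσ - p, w⟫) + s ^ 2 * ‖w‖ ^ 2 := by
      rw [norm_add_sq_real, real_inner_smul_right]
      have h2 : ‖s • w‖ ^ 2 = s ^ 2 * ‖w‖ ^ 2 := by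
        rw [norm_smul, mul_pow, Real.norm_eq_abs, sq_abs]
      rw [hnorm_ap, h2]
    have hsq2 : (rσ + ε / 2 * s) ^ 2 ≤ rσ ^ 2 + 2 * (s * ⟪aσ - p, w⟫) + s ^ 2 * ‖w‖ ^ 2 := by
      rw [← hsq]
      exact pow_le_pow_left₀ (by positivity) hineq1 2
    have hkeyineq : ε / 2 * rσ - s / 2 * ‖w‖ ^ 2 ≤ ⟪aσ - p, w⟫ := quad_step hspos hsq2
    have hX : ε / 4 * rσ ≤ ⟪aσ - p, w⟫ :=
      quad_step2 hε hrσpos hspos.le hkeyineq hs2 hrσ2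
    set v := rσ⁻¹ • (aσ - p) with hvdef
    have hvn : ‖v‖ = 1 := by
      rw [hvdef, norm_smul, Real.norm_eq_abs, abs_of_pos (inv_pos.2 hrσpos), hnorm_ap]
      exact inv_mul_cancel₀ (ne_of_gt hrσpos)
    have hvw : ε / 4 ≤ ⟪v, w⟫ := by
      rw [hvdef, real_inner_smul_left]
      have h1 := mul_le_mul_of_nonneg_left hX (inv_pos.2 hrσpos).le
      calc ε / 4 = rσ⁻¹ * (ε / 4 * rσ) := by field_simp
        _ ≤ rσ⁻¹ * ⟪aσ - p, w⟫ := h1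
    have hploc : ‖p - z0‖ ≤ 2 * t0 * ‖w‖ := by
      have h1 : rσ ≤ dist aσ z0 := by
        rw [hrσdef, hgdef]
        exact Metric.infDist_le_dist_of_mem hz0
      have h2 : dist aσ z0 = σ * ‖w‖ := by
        rw [dist_eq_norm, haσdef]
        have : z0 + σ • w - z0 = σ • w := by abel
        rw [this, norm_smul, Real.norm_eq_abs, abs_of_nonneg hσnn]
      have h3 : ‖p - z0‖ ≤ ‖p - aσ‖ + ‖aσ - z0‖ := by
        have : p - z0 = (p - aσ) + (aσ - z0) := by abel
        rw [this]; exact norm_add_le _ _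
      have h4 : ‖p - aσ‖ = rσ := by rw [← hnorm_ap, norm_sub_rev]
      have h5 : ‖aσ - z0‖ = σ * ‖w‖ := by rw [← dist_eq_norm]; exact h2
      have h6 : σ * ‖w‖ ≤ t0 * ‖w‖ := mul_le_mul_of_nonneg_right hστ (norm_nonneg w)
      rw [h4, h5] at h3
      rw [h2] at h1
      linarith
    have hpρ : ‖p - z‖ < ρ := by
      have h1 : ‖p - z‖ ≤ ‖p - z0‖ + ‖z0 - z‖ := by
        have : p - z = (p - z0) + (z0 - z) := by abel
        rw [this]; exact norm_add_le _ _
      linarith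
    have hnear : ∀ u ∈ Ω', dist aσ p ≤ dist aσ u := by
      intro u hu
      rw [← hpd]
      exact Metric.infDist_le_dist_of_mem hu
    have hvreg : v ∈ regNormal Ω p := by
      intro w' hw'
      have h0 := prox aσ p hpΩ' hpρ hnear w' hw'
      rw [hvdef, real_inner_smul_left]
      exact mul_nonpos_of_nonneg_of_nonpos (inv_pos.2 hrσpos).le h0
    exact ⟨p, v, hpΩ'.1, hploc, hvreg, hvn, hvw⟩
  -- now prove clarke cone membership
  intro zk t hzkΩ hzk ht htd
  set q : ℕ → ℝ := fun k => Metric.infDist (zk k + t k • w) Ω' / t k with hqdef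
  have hqnn : ∀ k, 0 ≤ q k := fun k => div_nonneg Metric.infDist_nonneg (ht k).le
  have hqto : Tendsto q atTop (𝓝 0) := by
    by_contra hq0
    rw [Metric.tendsto_atTop] at hq0
    push_neg at hq0
    obtain ⟨ε, hε, hfreq⟩ := hq0
    have hev : ∀ᶠ k in atTop, zk k ∈ V ∧ ‖zk k - z‖ + 2 * t k * ‖w‖ < ρ := by
      have h1 : ∀ᶠ k in atTop, zk k ∈ V := hzk.eventually_mem hV
      have h2 : Tendsto (fun k => ‖zk k - z‖ + 2 * t k * ‖w‖) atTop (𝓝 0) := by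
        have ha : Tendsto (fun k => ‖zk k - z‖) atTop (𝓝 0) := by
          have h := hzk
          rw [← tendsto_sub_nhds_zero_iff] at h
          simpa using h.norm
        have hb : Tendsto (fun k => 2 * t k * ‖w‖) atTop (𝓝 0) := by
          have := (htd.const_mul 2).mul_const ‖w‖
          simpa using this
        simpa using ha.add hb
      have h3 := h2.eventually_lt_const hρpos
      filter_upwards [h1, h3] with k hk1 hk3
      exact ⟨hk1, hk3⟩
    obtain ⟨N, hN⟩ := eventually_atTop.1 hev
    have hsel : ∀ j : ℕ, ∃ nn : ℕ, nn ≥ max N j ∧ ε ≤ q nn := by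
      intro j
      obtain ⟨nn, hn1, hn2⟩ := hfreq (max N j)
      refine ⟨nn, hn1, ?_⟩
      rw [Real.dist_eq, sub_zero, abs_of_nonneg (hqnn nn)] at hn2
      exact hn2
    choose nj hnj1 hnj2 using hsel
    have happ : ∀ j : ℕ, ∃ p v : H, p ∈ Ω ∧ ‖p - zk (nj j)‖ ≤ 2 * t (nj j) * ‖w‖ ∧
        v ∈ regNormal Ω p ∧ ‖v‖ = 1 ∧ ε / 4 ≤ ⟪v, w⟫ := by
      intro j
      have hk := hN (nj j) (le_trans (le_max_left _ _) (hnj1 j))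
      refine key ε hε (zk (nj j)) (t (nj j)) ⟨hzkΩ _, hk.1⟩ (ht _) hk.2 ?_
      have := hnj2 j
      rw [hqdef] at this
      rw [le_div_iff₀ (ht (nj j))] at this
      linarith
    choose p v hpΩ hploc hvreg hvn hvw using happ
    have hnj_tendsto : Tendsto nj atTop atTop :=
      tendsto_atTop_mono (fun j => le_trans (le_max_right N j) (hnj1 j)) tendsto_id
    have hpz : Tendsto p atTop (𝓝 z) := by
      rw [← tendsto_sub_nhds_zero_iff]
      apply squeeze_zero_norm (f := fun j => p j - z)
        (a := fun j => 2 * t (nj j) * ‖w‖ + ‖zk (nj j) - z‖)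
      · intro j
        have h1 : p j - z = (p j - zk (nj j)) + (zk (nj j) - z) := by abel
        rw [h1]
        exact le_trans (norm_add_le _ _) (add_le_add (hploc j) le_rfl)
      · have ha : Tendsto (fun j => 2 * t (nj j) * ‖w‖) atTop (𝓝 0) := by
          have := ((htd.comp hnj_tendsto).const_mul 2).mul_const ‖w‖
          simpa using this
        have hb : Tendsto (fun j => ‖zk (nj j) - z‖) atTop (𝓝 0) := by
          have h := hzk.comp hnj_tendsto
          rw [← tendsto_sub_nhds_zero_iff] at h
          simpa using h.norm
        simpa using ha.add hb
    have hvs : ∀ j, v j ∈ Metric.sphere (0:H) 1 := by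
      intro j; rw [mem_sphere_iff_norm, sub_zero]; exact hvn j
    obtain ⟨vb, hvb, φ, hφ, hvφ⟩ := (isCompact_sphere (0:H) 1).tendsto_subseq hvs
    have hvbN : vb ∈ limNormal Ω z :=
      ⟨p ∘ φ, v ∘ φ, fun j => hpΩ _, hpz.comp hφ.tendsto_atTop, fun j => hvreg _, hvφ⟩
    have h1 := hperp vb hvbN w hwpara
    have h2 : ε / 4 ≤ ⟪vb, w⟫ := by
      have hten : Tendsto (fun j => ⟪v (φ j), w⟫) atTop (𝓝 ⟪vb, w⟫) :=
        hvφ.inner tendsto_const_nhds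
      exact ge_of_tendsto hten (Filter.Eventually.of_forall fun j => hvw (φ j))
    linarith
  -- construct the approximating sequence
  have hex : ∀ k : ℕ, ∃ pk ∈ Ω', dist (zk k + t k • w) pk <
      Metric.infDist (zk k + t k • w) Ω' + t k * (1 / (k + 1)) := by
    intro k
    apply (Metric.infDist_lt_iff hΩ'ne).1
    have : 0 < t k * (1 / (k + 1)) := mul_pos (ht k) (tseq_pos k)
    linarith
  choose pk hpkΩ' hpkd using hex
  refine ⟨fun k => (t k)⁻¹ • (pk k - zk k), ?_, ?_⟩
  · rw [← tendsto_sub_nhds_zero_iff]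
    apply squeeze_zero_norm (a := fun k => q k + 1 / (k + 1))
    · intro k
      have he : (t k)⁻¹ • (pk k - zk k) - w = (t k)⁻¹ • (pk k - zk k - t k • w) := by
        have h1 : (t k)⁻¹ • (t k • w) = w := by
          rw [smul_smul, inv_mul_cancel₀ (ne_of_gt (ht k)), one_smul]
        conv_rhs => rw [smul_sub, h1]
      rw [he, norm_smul, Real.norm_eq_abs, abs_of_pos (inv_pos.2 (ht k))]
      have hd : ‖pk k - zk k - t k • w‖ = dist (zk k + t k • w) (pk k) := by
        rw [dist_eq_norm, ← norm_neg]; congr 1; abel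
      rw [hd]
      have h1 := (hpkd k).le
      calc (t k)⁻¹ * dist (zk k + t k • w) (pk k)
          ≤ (t k)⁻¹ * (Metric.infDist (zk k + t k • w) Ω' + t k * (1 / (k + 1))) :=
            mul_le_mul_of_nonneg_left h1 (inv_pos.2 (ht k)).le
        _ = q k + 1 / (k + 1) := by
            simp only [hqdef]
            rw [mul_add, ← mul_assoc, inv_mul_cancel₀ (ne_of_gt (ht k)), one_mul,
              inv_mul_eq_div]
    · simpa using hqto.add tseq_tendsto
  · intro k
    have : zk k + t k • ((t k)⁻¹ • (pk k - zk k)) = pk k := by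
      rw [smul_smul, mul_inv_cancel₀ (ne_of_gt (ht k)), one_smul]; abel
    rw [this]
    exact (hpkΩ' k).1

end AbstractHard

section Transport

variable {X Y : Type*} [NormedAddCommGroup X] [NormedSpace ℝ X]
  [NormedAddCommGroup Y] [NormedSpace ℝ Y]

lemma tanCone_preimage_subset (L : X ≃L[ℝ] Y) (Ω : Set Y) (z : X) :
    tanCone (L ⁻¹' Ω) z ⊆ L ⁻¹' tanCone Ω (L z) := by
  rintro w ⟨t, wk, ht, htd, hwk, hm⟩
  refine ⟨t, fun k => L (wk k), ht, htd, (L.continuous.tendsto w).comp hwk, fun k => ?_⟩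
  have := hm k
  simpa [map_add, map_smul] using this

lemma tanCone_preimage (L : X ≃L[ℝ] Y) (Ω : Set Y) (z : X) :
    tanCone (L ⁻¹' Ω) z = L ⁻¹' tanCone Ω (L z) := by
  apply Set.Subset.antisymm (tanCone_preimage_subset L Ω z)
  intro w hw
  have h2 := tanCone_preimage_subset L.symm (L ⁻¹' Ω) (L z)
  have e1 : L.symm ⁻¹' (L ⁻¹' Ω) = Ω := by ext y; simp
  rw [e1] at h2
  have := h2 hw
  simpa using this

lemma paraCone_preimage_subset (L : X ≃L[ℝ] Y) (Ω : Set Y) (z : X) :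
    paraCone (L ⁻¹' Ω) z ⊆ L ⁻¹' paraCone Ω (L z) := by
  rintro w ⟨zk, t, wk, hzk, hz, ht, htd, hwk, hm⟩
  refine ⟨fun k => L (zk k), t, fun k => L (wk k), fun k => hzk k,
    (L.continuous.tendsto z).comp hz, ht, htd, (L.continuous.tendsto w).comp hwk, fun k => ?_⟩
  have := hm k
  simpa [map_add, map_smul] using this

lemma paraCone_preimage (L : X ≃L[ℝ] Y) (Ω : Set Y) (z : X) :
    paraCone (L ⁻¹' Ω) z = L ⁻¹' paraCone Ω (L z) := by
  apply Set.Subset.antisymm (paraCone_preimage_subset L Ω z)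
  intro w hw
  have h2 := paraCone_preimage_subset L.symm (L ⁻¹' Ω) (L z)
  have e1 : L.symm ⁻¹' (L ⁻¹' Ω) = Ω := by ext y; simp
  rw [e1] at h2
  have := h2 hw
  simpa using this

lemma clarkeCone_preimage_subset (L : X ≃L[ℝ] Y) (Ω : Set Y) (z : X) :
    clarkeCone (L ⁻¹' Ω) z ⊆ L ⁻¹' clarkeCone Ω (L z) := by
  intro w hw zk t hzk hz ht htd
  have hz' : Tendsto (fun k => L.symm (zk k)) atTop (𝓝 z) := by
    have := (L.symm.continuous.tendsto (L z)).comp hz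
    simpa [Function.comp_def] using this
  obtain ⟨wk, hwk, hm⟩ := hw (fun k => L.symm (zk k)) t
    (fun k => by simpa using hzk k) hz' ht htd
  refine ⟨fun k => L (wk k), (L.continuous.tendsto w).comp hwk, fun k => ?_⟩
  have := hm k
  simp only [Set.mem_preimage] at this
  simpa [map_add, map_smul] using this

lemma clarkeCone_preimage (L : X ≃L[ℝ] Y) (Ω : Set Y) (z : X) :
    clarkeCone (L ⁻¹' Ω) z = L ⁻¹' clarkeCone Ω (L z) := by
  apply Set.Subset.antisymm (clarkeCone_preimage_subset L Ω z)
  intro w hw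
  have h2 := clarkeCone_preimage_subset L.symm (L ⁻¹' Ω) (L z)
  have e1 : L.symm ⁻¹' (L ⁻¹' Ω) = Ω := by ext y; simp
  rw [e1] at h2
  have := h2 hw
  simpa using this

end Transport

section FinalHelpers

variable {E' F' : Type*} [NormedAddCommGroup E'] [InnerProductSpace ℝ E']
  [NormedAddCommGroup F'] [InnerProductSpace ℝ F']

lemma orthSet2_subspace (s : Set (E' × F')) :
    ∃ O : Submodule ℝ (E' × F'), (O : Set (E' × F')) = orthSet2 s := by
  refine ⟨{ carrier := orthSet2 s, add_mem' := ?_, zero_mem' := ?_, smul_mem' := ?_ }, rfl⟩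
  · intro a b ha hb w hw
    have h1 := ha w hw
    have h2 := hb w hw
    show inner2 (a + b) w = 0
    unfold inner2 at h1 h2 ⊢
    simp only [Prod.fst_add, Prod.snd_add, inner_add_left]
    linarith
  · intro w hw
    show inner2 0 w = 0
    unfold inner2
    simp
  · intro c x hx w hw
    have h1 := hx w hw
    show inner2 (c • x) w = 0
    unfold inner2 at h1 ⊢
    simp only [Prod.smul_fst, Prod.smul_snd, real_inner_smul_left]
    rw [← mul_add, h1, mul_zero]

/-- The linear map `q ↦ (q.2, -q.1)`. -/
def negSwap (E F : Type*) [AddCommGroup E] [Module ℝ E] [AddCommGroup F] [Module ℝ F] :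
    (F × E) →ₗ[ℝ] (E × F) where
  toFun q := (q.2, -q.1)
  map_add' a b := by simp [Prod.ext_iff]; abel_nf
  map_smul' c a := by simp [Prod.ext_iff]

lemma negSwap_apply {E F : Type*} [AddCommGroup E] [Module ℝ E] [AddCommGroup F] [Module ℝ F]
    (q : F × E) : negSwap E F q = (q.2, -q.1) := rfl

end FinalHelpers

set_option maxHeartbeats 1000000 in
theorem stmt_2' {n m : ℕ} (F : Euc n → Set (Euc m)) (xb : Euc n) (yb : Euc m)
    (hy : yb ∈ F xb) (hloc : LocallyClosedAt (gphOf F) (xb, yb)) :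
    (StrictlySmoothAt (gphOf F) (xb, yb) ↔
      (IsLinearSubspace (paraCone (gphOf F) (xb, yb)) ∧
        IsLinearSubspace (coderivGraph (gphOf F) (xb, yb)) ∧
        coderivGraph (gphOf F) (xb, yb) =
          {q : Euc m × Euc n | (q.2, -q.1) ∈ orthSet2 (paraCone (gphOf F) (xb, yb))})) ∧
    (StrictlySmoothAt (gphOf F) (xb, yb) → NormallyRegular2At (gphOf F) (xb, yb)) := by
  classical
  have hzbΓ : (xb, yb) ∈ gphOf F := hy
  set Γ : Set (Euc n × Euc m) := gphOf F with hΓdef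
  set zb : Euc n × Euc m := (xb, yb) with hzbdef
  let e : WithLp 2 (Euc n × Euc m) ≃L[ℝ] (Euc n × Euc m) :=
    WithLp.prodContinuousLinearEquiv 2 ℝ (Euc n) (Euc m)
  haveI hFD : FiniteDimensional ℝ (WithLp 2 (Euc n × Euc m)) :=
    (e.symm.toLinearEquiv).finiteDimensional
  set ΓH : Set (WithLp 2 (Euc n × Euc m)) := e ⁻¹' Γ with hΓHdef
  set zH : WithLp 2 (Euc n × Euc m) := e.symm zb with hzHdef
  have hez : e zH = zb := e.apply_symm_apply zb
  have hzHΓ : zH ∈ ΓH := by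
    show e zH ∈ Γ
    rw [hez]
    exact hzbΓ
  have htanEq : ∀ z0 : Euc n × Euc m, tanCone ΓH (e.symm z0) = e ⁻¹' tanCone Γ z0 := by
    intro z0
    rw [hΓHdef, tanCone_preimage e Γ (e.symm z0), e.apply_symm_apply]
  have hparaEq : paraCone ΓH zH = e ⁻¹' paraCone Γ zb := by
    rw [hΓHdef, hzHdef, paraCone_preimage e Γ (e.symm zb), e.apply_symm_apply]
  have hclarkeEq : clarkeCone ΓH zH = e ⁻¹' clarkeCone Γ zb := by
    rw [hΓHdef, hzHdef, clarkeCone_preimage e Γ (e.symm zb), e.apply_symm_apply]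
  have hsmooth_iff : StrictlySmoothAt Γ zb ↔ clarkeCone ΓH zH = paraCone ΓH zH := by
    unfold StrictlySmoothAt
    rw [hclarkeEq, hparaEq]
    constructor
    · intro h; rw [h]
    · intro h; exact (Set.preimage_eq_preimage e.surjective).mp h
  have hinner : ∀ a b : Euc n × Euc m, inner2 a b = ⟪e.symm a, e.symm b⟫ := fun a b => rfl
  have hregIff : ∀ z0 v : Euc n × Euc m,
      v ∈ regNormal2 Γ z0 ↔ e.symm v ∈ regNormal ΓH (e.symm z0) := by
    intro z0 v
    constructor
    · intro h u hu
      rw [htanEq z0] at hu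
      have h1 := h (e u) hu
      rw [hinner] at h1
      simpa using h1
    · intro h u hu
      have h1 : e.symm u ∈ tanCone ΓH (e.symm z0) := by
        rw [htanEq z0]
        simpa using hu
      have h2 := h _ h1
      rw [hinner v u]
      exact h2
  have hlimIff : ∀ v : Euc n × Euc m, v ∈ limNormal2 Γ zb ↔ e.symm v ∈ limNormal ΓH zH := by
    intro v
    constructor
    · rintro ⟨zk, vk, hzk, hz, hvk, hv⟩
      refine ⟨fun k => e.symm (zk k), fun k => e.symm (vk k),
        fun k => by show e (e.symm (zk k)) ∈ Γ; simpa using hzk k,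
        (e.symm.continuous.tendsto zb).comp hz,
        fun k => (hregIff (zk k) (vk k)).mp (hvk k),
        (e.symm.continuous.tendsto v).comp hv⟩
    · rintro ⟨zk, vk, hzk, hz, hvk, hv⟩
      refine ⟨fun k => e (zk k), fun k => e (vk k), fun k => hzk k, ?_, fun k => ?_, ?_⟩
      · have h1 := (e.continuous.tendsto zH).comp hz
        rwa [hez] at h1
      · apply (hregIff (e (zk k)) (e (vk k))).mpr
        simpa using hvk k
      · have h1 := (e.continuous.tendsto (e.symm v)).comp hv
        rwa [e.apply_symm_apply] at h1
  set S : Set (WithLp 2 (Euc n × Euc m)) := paraCone ΓH zH with hSdef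
  have main : StrictlySmoothAt Γ zb →
      (IsLinearSubspace (paraCone Γ zb) ∧ regNormal2 Γ zb = limNormal2 Γ zb ∧
        limNormal2 Γ zb = orthSet2 (paraCone Γ zb)) := by
    intro h
    have hss : clarkeCone ΓH zH = S := hsmooth_iff.mp h
    have hSclar : ∀ {x : WithLp 2 (Euc n × Euc m)}, x ∈ S ↔ x ∈ clarkeCone ΓH zH :=
      fun {x} => by rw [hss]
    have Smod : ∃ Sm : Submodule ℝ (WithLp 2 (Euc n × Euc m)), (Sm : Set _) = S := by
      refine ⟨{ carrier := S, add_mem' := ?_, zero_mem' := ?_, smul_mem' := ?_ }, rfl⟩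
      · intro a b ha hb
        exact hSclar.mpr (clarke_add (hSclar.mp ha) (hSclar.mp hb))
      · exact hSclar.mpr zero_mem_clarke
      · intro c x hx
        rcases lt_trichotomy c 0 with hc | hc | hc
        · have h1 : (-c) • x ∈ S := hSclar.mpr (clarke_smul (by linarith) (hSclar.mp hx))
          have h2 := para_neg h1
          simpa using h2
        · rw [hc, zero_smul]
          exact hSclar.mpr zero_mem_clarke
        · exact hSclar.mpr (clarke_smul hc (hSclar.mp hx))
    have horth : limNormal ΓH zH = {v | ∀ u ∈ S, ⟪v, u⟫ = 0} := by
      apply Set.Subset.antisymm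
      · intro v hv u hu
        have h1 := limNormal_clarke_polar hv (hSclar.mp hu)
        have h2 := limNormal_clarke_polar hv (hSclar.mp (para_neg hu))
        rw [inner_neg_right] at h2
        linarith
      · intro v hv
        apply regNormal_subset_limNormal hzHΓ
        intro w' hw'
        exact le_of_eq (hv _ (tan_subset_para hzHΓ hw'))
    have hreglim : regNormal ΓH zH = limNormal ΓH zH := by
      apply Set.Subset.antisymm (regNormal_subset_limNormal hzHΓ)
      intro v hv
      rw [horth] at hv
      intro w' hw'
      exact le_of_eq (hv _ (tan_subset_para hzHΓ hw'))
    have hpara_img : paraCone Γ zb = e '' S := by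
      calc paraCone Γ zb = e '' (e ⁻¹' paraCone Γ zb) :=
            (Set.image_preimage_eq _ e.surjective).symm
        _ = e '' S := by rw [← hparaEq]
    refine ⟨?_, ?_, ?_⟩
    · obtain ⟨Sm, hSm⟩ := Smod
      refine ⟨Sm.map (e.toLinearEquiv.toLinearMap), ?_⟩
      rw [Submodule.map_coe, hSm, hpara_img]
      rfl
    · ext v
      change v ∈ regNormal2 Γ zb ↔ v ∈ limNormal2 Γ zb
      show v ∈ regNormal2 Γ zb ↔ v ∈ limNormal2 Γ zb
      rw [hregIff zb v, hlimIff v, hreglim]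
    · ext v
      rw [hlimIff v, horth]
      show _ ↔ ∀ u ∈ paraCone Γ zb, inner2 v u = 0
      constructor
      · intro hv u hu
        have h1 : e.symm u ∈ S := by
          rw [hparaEq]
          simpa using hu
        have h2 := hv _ h1
        rw [hinner v u]
        exact h2
      · intro hv u hu
        have h1 : e u ∈ paraCone Γ zb := by
          rw [hparaEq] at hu
          exact hu
        have h2 := hv _ h1
        rw [hinner v (e u)] at h2
        simpa using h2
  constructor
  · constructor
    · intro h
      obtain ⟨hIs, _, hlo⟩ := main h
      refine ⟨hIs, ?_, ?_⟩
      · obtain ⟨O, hO⟩ := orthSet2_subspace (paraCone Γ zb)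
        refine ⟨Submodule.comap (negSwap (Euc n) (Euc m)) O, ?_⟩
        ext q
        rw [SetLike.mem_coe, Submodule.mem_comap, ← SetLike.mem_coe, hO]
        show (q.2, -q.1) ∈ orthSet2 (paraCone Γ zb) ↔ (q.2, -q.1) ∈ limNormal2 Γ zb
        rw [hlo]
      · show {q : Euc m × Euc n | (q.2, -q.1) ∈ limNormal2 Γ zb} = _
        rw [hlo]
    · rintro ⟨-, -, heq⟩
      have hlo : limNormal2 Γ zb = orthSet2 (paraCone Γ zb) := by
        ext p
        have hq := Set.ext_iff.mp heq (-p.2, p.1)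
        simp only [coderivGraph, Set.mem_setOf_eq, neg_neg] at hq
        simpa using hq
      have hperp : ∀ v ∈ limNormal ΓH zH, ∀ u ∈ S, ⟪v, u⟫ ≤ 0 := by
        intro v hv u hu
        have h1 : e v ∈ limNormal2 Γ zb := (hlimIff (e v)).mpr (by simpa using hv)
        rw [hlo] at h1
        have h2 : e u ∈ paraCone Γ zb := by
          rw [hparaEq] at hu
          exact hu
        have h3 := h1 (e u) h2
        rw [hinner (e v) (e u)] at h3
        simp only [ContinuousLinearEquiv.symm_apply_apply] at h3
        exact le_of_eq h3
      have hlocH : LocallyClosedAt ΓH zH := by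
        obtain ⟨V, hV, hVc, hIC⟩ := hloc
        refine ⟨e ⁻¹' V, ?_, hVc.preimage e.continuous, ?_⟩
        · apply e.continuous.continuousAt.preimage_mem_nhds
          rw [hez]
          exact hV
        · have hre : ΓH ∩ e ⁻¹' V = e ⁻¹' (Γ ∩ V) := by rw [Set.preimage_inter]
          rw [hre]
          exact hIC.preimage e.continuous
      have hsub := para_subset_clarke hzHΓ hlocH hperp
      have hcp : clarkeCone ΓH zH = S :=
        Set.Subset.antisymm ((clarke_subset_tan hzHΓ).trans (tan_subset_para hzHΓ)) hsub
      exact hsmooth_iff.mpr hcp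
  · intro h
    exact (main h).2.1

/-- Lemma 2.4: characterization of strict proto-differentiability via
the strict derivative and the limiting coderivative. -/
theorem stmt_2 {n m : ℕ} (F : Euc n → Set (Euc m)) (xb : Euc n) (yb : Euc m)
    (hy : yb ∈ F xb) (hloc : LocallyClosedAt (gphOf F) (xb, yb)) :
    (StrictlySmoothAt (gphOf F) (xb, yb) ↔
      (IsLinearSubspace (paraCone (gphOf F) (xb, yb)) ∧
        IsLinearSubspace (coderivGraph (gphOf F) (xb, yb)) ∧
        coderivGraph (gphOf F) (xb, yb) =
          {q : Euc m × Euc n | (q.2, -q.1) ∈ orthSet2 (paraCone (gphOf F) (xb, yb))})) ∧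
    (StrictlySmoothAt (gphOf F) (xb, yb) → NormallyRegular2At (gphOf F) (xb, yb)) :=
  stmt_2' F xb yb hy hloc
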